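/- Let K be a convex subset of a real vector space V spanning V⁰ = ℝ(K - K), and let ρ be a metric on K. Then there exists a norm M on V⁰ with ρ(μ,ν) = M(μ - ν) for all μ, ν ∈ K if and only if ρ is convex, midpoint balanced, and midpoint concave. Moreover M is unique. -/

import Mathlib

open scoped Pointwise

/-- A metric `ρ` on a convex set `K` (encoded as a function `V → V → ℝ` with the
metric axioms holding on `K`). -/
def IsMetricOn {V : Type*} [AddCommGroup V] [Module ℝ V] (K : Set V)
    (ρ : V → V → ℝ) : Prop :=
  (∀ μ ∈ K, ∀ ν ∈ K, (ρ μ ν = 0 ↔ μ = ν)) ∧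
  (∀ μ ∈ K, ∀ ν ∈ K, ρ μ ν = ρ ν μ) ∧
  (∀ μ ∈ K, ∀ ν ∈ K, ∀ κ ∈ K, ρ μ κ ≤ ρ μ ν + ρ ν κ)

/-- A norm on the submodule `V⁰ = ℝ(K-K)`, encoded as a function with the norm axioms. -/
def IsNormOn {V : Type*} [AddCommGroup V] [Module ℝ V] (W : Submodule ℝ V)
    (M : W → ℝ) : Prop :=
  (∀ x : W, (M x = 0 ↔ x = 0)) ∧
  (∀ x y : W, M (x + y) ≤ M x + M y) ∧
  (∀ (t : ℝ) (x : W), M (t • x) = |t| * M x)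

section Aux

variable {V : Type*} [AddCommGroup V] [Module ℝ V] {K : Set V} {ρ : V → V → ℝ}

/-- Balancedness in difference form. -/
lemma auxA (hbal : ∀ μ ∈ K, ∀ ν ∈ K, ∀ μ' ∈ K, ∀ ν' ∈ K,
      (2 : ℝ)⁻¹ • (μ + ν') = (2 : ℝ)⁻¹ • (μ' + ν) → ρ μ ν = ρ μ' ν')
    {μ ν μ' ν' : V} (hμ : μ ∈ K) (hν : ν ∈ K) (hμ' : μ' ∈ K) (hν' : ν' ∈ K)
    (h : μ - ν = μ' - ν') : ρ μ ν = ρ μ' ν' := by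
  apply hbal μ hμ ν hν μ' hμ' ν' hν'
  rw [sub_eq_sub_iff_add_eq_add.mp h]

lemma auxB_le (hρ : IsMetricOn K ρ)
    (hconv : ∀ μ ∈ K, ∀ ν₁ ∈ K, ∀ ν₂ ∈ K, ∀ t ∈ Set.Icc (0 : ℝ) 1,
      ρ μ (t • ν₁ + (1 - t) • ν₂) ≤ t * ρ μ ν₁ + (1 - t) * ρ μ ν₂)
    {μ ν : V} (hμ : μ ∈ K) (hν : ν ∈ K) {t : ℝ} (ht : t ∈ Set.Icc (0 : ℝ) 1) :
    ρ ν (t • μ + (1 - t) • ν) ≤ t * ρ ν μ := by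
  have h := hconv ν hν μ hμ ν hν t ht
  have h0 : ρ ν ν = 0 := (hρ.1 ν hν ν hν).2 rfl
  rw [h0] at h
  linarith

/-- Homogeneity along segments. -/
lemma auxB (hK : Convex ℝ K) (hρ : IsMetricOn K ρ)
    (hconv : ∀ μ ∈ K, ∀ ν₁ ∈ K, ∀ ν₂ ∈ K, ∀ t ∈ Set.Icc (0 : ℝ) 1,
      ρ μ (t • ν₁ + (1 - t) • ν₂) ≤ t * ρ μ ν₁ + (1 - t) * ρ μ ν₂)
    (hbal : ∀ μ ∈ K, ∀ ν ∈ K, ∀ μ' ∈ K, ∀ ν' ∈ K,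
      (2 : ℝ)⁻¹ • (μ + ν') = (2 : ℝ)⁻¹ • (μ' + ν) → ρ μ ν = ρ μ' ν')
    {μ ν : V} (hμ : μ ∈ K) (hν : ν ∈ K) {t : ℝ} (ht : t ∈ Set.Icc (0 : ℝ) 1) :
    ρ ν (t • μ + (1 - t) • ν) = t * ρ ν μ := by
  obtain ⟨ht0, ht1⟩ := ht
  have hp : t • μ + (1 - t) • ν ∈ K := hK hμ hν ht0 (by linarith) (by ring)
  have hr : (1 - t) • μ + t • ν ∈ K := hK hμ hν (by linarith) ht0 (by ring)
  refine le_antisymm (auxB_le hρ hconv hμ hν ⟨ht0, ht1⟩) ?_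
  -- lower bound via triangle inequality
  have htri := hρ.2.2 ν hν (t • μ + (1 - t) • ν) hp μ hμ
  have hsym : ρ (t • μ + (1 - t) • ν) μ = ρ μ (t • μ + (1 - t) • ν) := hρ.2.1 _ hp μ hμ
  have hAeq : ρ μ (t • μ + (1 - t) • ν) = ρ ((1 - t) • μ + t • ν) ν := by
    refine auxA hbal hμ hp hr hν ?_
    module
  have h2 : ρ ((1 - t) • μ + t • ν) ν = ρ ν ((1 - t) • μ + t • ν) := hρ.2.1 _ hr ν hν
  have h3 : ρ ν ((1 - t) • μ + (1 - (1 - t)) • ν) ≤ (1 - t) * ρ ν μ :=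
    auxB_le hρ hconv hμ hν ⟨by linarith, by linarith⟩
  have h4 : (1 : ℝ) - (1 - t) = t := by ring
  rw [h4] at h3
  linarith

/-- Scaled difference realized inside `K`. -/
lemma auxScaled (hK : Convex ℝ K) (hρ : IsMetricOn K ρ)
    (hconv : ∀ μ ∈ K, ∀ ν₁ ∈ K, ∀ ν₂ ∈ K, ∀ t ∈ Set.Icc (0 : ℝ) 1,
      ρ μ (t • ν₁ + (1 - t) • ν₂) ≤ t * ρ μ ν₁ + (1 - t) * ρ μ ν₂)
    (hbal : ∀ μ ∈ K, ∀ ν ∈ K, ∀ μ' ∈ K, ∀ ν' ∈ K,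
      (2 : ℝ)⁻¹ • (μ + ν') = (2 : ℝ)⁻¹ • (μ' + ν) → ρ μ ν = ρ μ' ν')
    {μ ν : V} (hμ : μ ∈ K) (hν : ν ∈ K) {t : ℝ} (ht : t ∈ Set.Icc (0 : ℝ) 1) :
    t • μ + (1 - t) • ν ∈ K ∧ (t • μ + (1 - t) • ν) - ν = t • (μ - ν) ∧
      ρ (t • μ + (1 - t) • ν) ν = t * ρ μ ν := by
  have hp : t • μ + (1 - t) • ν ∈ K := hK hμ hν ht.1 (by linarith [ht.2]) (by ring)
  refine ⟨hp, by module, ?_⟩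
  rw [hρ.2.1 _ hp ν hν, auxB hK hρ hconv hbal hμ hν ht, hρ.2.1 ν hν μ hμ]

/-- Well-definedness of the norm on rays (one-sided version). -/
lemma auxD (hK : Convex ℝ K) (hρ : IsMetricOn K ρ)
    (hconv : ∀ μ ∈ K, ∀ ν₁ ∈ K, ∀ ν₂ ∈ K, ∀ t ∈ Set.Icc (0 : ℝ) 1,
      ρ μ (t • ν₁ + (1 - t) • ν₂) ≤ t * ρ μ ν₁ + (1 - t) * ρ μ ν₂)
    (hbal : ∀ μ ∈ K, ∀ ν ∈ K, ∀ μ' ∈ K, ∀ ν' ∈ K,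
      (2 : ℝ)⁻¹ • (μ + ν') = (2 : ℝ)⁻¹ • (μ' + ν) → ρ μ ν = ρ μ' ν')
    {μ ν μ' ν' : V} (hμ : μ ∈ K) (hν : ν ∈ K) (hμ' : μ' ∈ K) (hν' : ν' ∈ K)
    {t s : ℝ} (ht : 0 < t) (hs : 0 < s) (hts : t ≤ s)
    (h : t • (μ - ν) = s • (μ' - ν')) : t * ρ μ ν = s * ρ μ' ν' := by
  set r : ℝ := t / s with hr
  have hr0 : 0 < r := div_pos ht hs
  have hr1 : r ≤ 1 := (div_le_one hs).2 hts
  have hs' : s ≠ 0 := ne_of_gt hs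
  have hd : μ' - ν' = r • (μ - ν) := by
    rw [hr, div_eq_inv_mul, mul_smul, h, smul_smul, inv_mul_cancel₀ hs', one_smul]
  obtain ⟨hp, hpd, hpρ⟩ := auxScaled hK hρ hconv hbal hμ hν ⟨le_of_lt hr0, hr1⟩ (t := r)
  have : ρ μ' ν' = ρ (r • μ + (1 - r) • ν) ν := auxA hbal hμ' hν' hp hν (by rw [hd, hpd])
  rw [this, hpρ, hr]
  field_simp

/-- Every element of the span is a positive multiple of a difference. -/
lemma auxC (hK : Convex ℝ K) (hne : K.Nonempty) {x : V}
    (hx : x ∈ Submodule.span ℝ (K - K)) :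
    ∃ t : ℝ, 0 < t ∧ ∃ μ ∈ K, ∃ ν ∈ K, x = t • (μ - ν) := by
  obtain ⟨μ₀, hμ₀⟩ := hne
  induction hx using Submodule.span_induction with
  | mem y hy =>
    obtain ⟨μ, hμ, ν, hν, rfl⟩ := hy
    exact ⟨1, one_pos, μ, hμ, ν, hν, (one_smul ℝ _).symm⟩
  | zero => exact ⟨1, one_pos, μ₀, hμ₀, μ₀, hμ₀, by simp⟩
  | add y z hy hz ihy ihz =>
    obtain ⟨t, ht, μ, hμ, ν, hν, rfl⟩ := ihy
    obtain ⟨s, hs, μ', hμ', ν', hν', rfl⟩ := ihz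
    have hts : 0 < t + s := by linarith
    have htsne : t + s ≠ 0 := ne_of_gt hts
    have hl0 : 0 ≤ t / (t + s) := le_of_lt (div_pos ht hts)
    have hl1 : 0 ≤ 1 - t / (t + s) := by
      have : t / (t + s) ≤ 1 := (div_le_one hts).2 (by linarith)
      linarith
    refine ⟨t + s, hts, (t / (t + s)) • μ + (1 - t / (t + s)) • μ',
      hK hμ hμ' hl0 hl1 (by ring),
      (t / (t + s)) • ν + (1 - t / (t + s)) • ν',
      hK hν hν' hl0 hl1 (by ring), ?_⟩
    match_scalars <;> field_simp <;> ring
  | smul c y hy ihy =>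
    obtain ⟨t, ht, μ, hμ, ν, hν, rfl⟩ := ihy
    rcases lt_trichotomy c 0 with hc | hc | hc
    · refine ⟨(-c) * t, mul_pos (neg_pos.2 hc) ht, ν, hν, μ, hμ, ?_⟩
      rw [smul_smul]
      match_scalars <;> ring
    · exact ⟨1, one_pos, μ₀, hμ₀, μ₀, hμ₀, by subst hc; simp⟩
    · exact ⟨c * t, by positivity, μ, hμ, ν, hν, by rw [smul_smul]⟩

end Aux


/-- Let `K` be convex in `V`, `V⁰ = ℝ(K - K)`, and `ρ` a metric on `K`.
There is a norm `M` on `V⁰` with `ρ(μ,ν) = M(μ - ν)` iff `ρ` is convex, midpoint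
balanced, and midpoint concave; moreover such `M` is unique. -/
theorem stmt_19 {V : Type*} [AddCommGroup V] [Module ℝ V] (K : Set V)
    (hK : Convex ℝ K) (ρ : V → V → ℝ) (hρ : IsMetricOn K ρ) :
    ((∃ M : Submodule.span ℝ (K - K) → ℝ, IsNormOn (Submodule.span ℝ (K - K)) M ∧
        ∀ μ, ∀ hμ : μ ∈ K, ∀ ν, ∀ hν : ν ∈ K,
          ρ μ ν = M ⟨μ - ν, Submodule.subset_span (Set.sub_mem_sub hμ hν)⟩) ↔
      ((∀ μ ∈ K, ∀ ν₁ ∈ K, ∀ ν₂ ∈ K, ∀ t ∈ Set.Icc (0 : ℝ) 1,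
          ρ μ (t • ν₁ + (1 - t) • ν₂) ≤ t * ρ μ ν₁ + (1 - t) * ρ μ ν₂) ∧
        (∀ μ ∈ K, ∀ ν ∈ K, ∀ μ' ∈ K, ∀ ν' ∈ K,
          (2 : ℝ)⁻¹ • (μ + ν') = (2 : ℝ)⁻¹ • (μ' + ν) → ρ μ ν = ρ μ' ν') ∧
        (∀ μ ∈ K, ∀ ν ∈ K, ∀ μ' ∈ K, ∀ ν' ∈ K,
          ρ ((2 : ℝ)⁻¹ • (μ + μ')) ((2 : ℝ)⁻¹ • (ν + ν')) ≤
            (ρ μ ν + ρ μ' ν') / 2))) ∧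
    (∀ M M' : Submodule.span ℝ (K - K) → ℝ,
      IsNormOn (Submodule.span ℝ (K - K)) M → IsNormOn (Submodule.span ℝ (K - K)) M' →
      (∀ μ, ∀ hμ : μ ∈ K, ∀ ν, ∀ hν : ν ∈ K,
        ρ μ ν = M ⟨μ - ν, Submodule.subset_span (Set.sub_mem_sub hμ hν)⟩) →
      (∀ μ, ∀ hμ : μ ∈ K, ∀ ν, ∀ hν : ν ∈ K,
        ρ μ ν = M' ⟨μ - ν, Submodule.subset_span (Set.sub_mem_sub hμ hν)⟩) →
      M = M') := by
  constructor
  · constructor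
    · -- forward: a norm gives the three properties
      rintro ⟨M, ⟨hM0, hMadd, hMsmul⟩, hMρ⟩
      refine ⟨?_, ?_, ?_⟩
      · -- convexity
        intro μ hμ ν₁ hν₁ ν₂ hν₂ t ht
        have hν : t • ν₁ + (1 - t) • ν₂ ∈ K :=
          hK hν₁ hν₂ ht.1 (by linarith [ht.2]) (by ring)
        rw [hMρ μ hμ _ hν, hMρ μ hμ ν₁ hν₁, hMρ μ hμ ν₂ hν₂]
        have key : (⟨μ - (t • ν₁ + (1 - t) • ν₂),
            Submodule.subset_span (Set.sub_mem_sub hμ hν)⟩ :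
              Submodule.span ℝ (K - K)) =
            t • ⟨μ - ν₁, Submodule.subset_span (Set.sub_mem_sub hμ hν₁)⟩ +
            (1 - t) • ⟨μ - ν₂, Submodule.subset_span (Set.sub_mem_sub hμ hν₂)⟩ := by
          apply Subtype.ext
          simp only [Submodule.coe_add, SetLike.val_smul]
          module
        rw [key]
        refine le_trans (hMadd _ _) (le_of_eq ?_)
        rw [hMsmul, hMsmul, abs_of_nonneg ht.1,
          abs_of_nonneg (by linarith [ht.2] : (0:ℝ) ≤ 1 - t)]
      · -- balanced
        intro μ hμ ν hν μ' hμ' ν' hν' h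
        have h2 : μ + ν' = μ' + ν := by
          have := congrArg (fun z => (2 : ℝ) • z) h
          simpa [smul_smul] using this
        have hd : μ - ν = μ' - ν' := sub_eq_sub_iff_add_eq_add.mpr h2
        rw [hMρ μ hμ ν hν, hMρ μ' hμ' ν' hν']
        congr 1
        exact Subtype.ext hd
      · -- midpoint concave
        intro μ hμ ν hν μ' hμ' ν' hν'
        have hm1 : (2 : ℝ)⁻¹ • (μ + μ') ∈ K := by
          rw [smul_add]
          exact hK hμ hμ' (by norm_num) (by norm_num) (by norm_num)
        have hm2 : (2 : ℝ)⁻¹ • (ν + ν') ∈ K := by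
          rw [smul_add]
          exact hK hν hν' (by norm_num) (by norm_num) (by norm_num)
        rw [hMρ _ hm1 _ hm2, hMρ μ hμ ν hν, hMρ μ' hμ' ν' hν']
        have key : (⟨(2 : ℝ)⁻¹ • (μ + μ') - (2 : ℝ)⁻¹ • (ν + ν'),
            Submodule.subset_span (Set.sub_mem_sub hm1 hm2)⟩ :
              Submodule.span ℝ (K - K)) =
            (2 : ℝ)⁻¹ • (⟨μ - ν, Submodule.subset_span (Set.sub_mem_sub hμ hν)⟩ +
              ⟨μ' - ν', Submodule.subset_span (Set.sub_mem_sub hμ' hν')⟩) := by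
          apply Subtype.ext
          simp only [Submodule.coe_add, SetLike.val_smul]
          module
        rw [key, hMsmul]
        have habs : |(2 : ℝ)⁻¹| = 2⁻¹ := by norm_num
        rw [habs]
        have := hMadd (⟨μ - ν, Submodule.subset_span (Set.sub_mem_sub hμ hν)⟩ :
            Submodule.span ℝ (K - K))
          ⟨μ' - ν', Submodule.subset_span (Set.sub_mem_sub hμ' hν')⟩
        linarith
    · -- backward: the three properties give a norm
      rintro ⟨hconv, hbal, -⟩
      by_cases hne : K.Nonempty
      · -- main case: K nonempty
        have rep : ∀ x : Submodule.span ℝ (K - K),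
            ∃ t : ℝ, 0 < t ∧ ∃ μ ∈ K, ∃ ν ∈ K, (x : V) = t • (μ - ν) :=
          fun x => auxC hK hne x.2
        choose T hT F hF G hG hrep using rep
        set M : Submodule.span ℝ (K - K) → ℝ := fun x => T x * ρ (F x) (G x) with hM
        have key : ∀ (x : Submodule.span ℝ (K - K)) (s : ℝ), 0 < s →
            ∀ a ∈ K, ∀ b ∈ K, (x : V) = s • (a - b) → M x = s * ρ a b := by
          intro x s hs a ha b hb hx
          have heq : T x • (F x - G x) = s • (a - b) := by rw [← hrep x, hx]
          rcases le_total (T x) s with h | h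
          · exact auxD hK hρ hconv hbal (hF x) (hG x) ha hb (hT x) hs h heq
          · exact (auxD hK hρ hconv hbal ha hb (hF x) (hG x) hs (hT x) h heq.symm).symm
        have hzero : ∀ x : Submodule.span ℝ (K - K), M x = 0 ↔ x = 0 := by
          intro x
          constructor
          · intro h
            have hTne : T x ≠ 0 := ne_of_gt (hT x)
            have hρ0 : ρ (F x) (G x) = 0 := by
              rcases mul_eq_zero.mp h with h' | h'
              · exact absurd h' hTne
              · exact h'
            have hFG : F x = G x := (hρ.1 _ (hF x) _ (hG x)).1 hρ0
            apply Subtype.ext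
            rw [hrep x, hFG, sub_self, smul_zero]
            rfl
          · intro h
            have hx0 : (x : V) = 0 := by rw [h]; rfl
            have h0 : T x • (F x - G x) = 0 := by rw [← hrep x, hx0]
            have hFG : F x = G x := by
              rcases smul_eq_zero.mp h0 with h' | h'
              · exact absurd h' (ne_of_gt (hT x))
              · exact sub_eq_zero.mp h'
            have : ρ (F x) (G x) = 0 := (hρ.1 _ (hF x) _ (hG x)).2 hFG
            rw [hM]
            simp [this]
        refine ⟨M, ⟨hzero, ?_, ?_⟩, ?_⟩
        · -- triangle inequality
          intro x y
          set t := T x with htdef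
          set s := T y with hsdef
          have ht : 0 < t := hT x
          have hs : 0 < s := hT y
          have hts : 0 < t + s := by linarith
          have htsne : t + s ≠ 0 := ne_of_gt hts
          set l : ℝ := t / (t + s) with hl
          have hl0 : 0 ≤ l := le_of_lt (div_pos ht hts)
          have hl1' : l ≤ 1 := (div_le_one hts).2 (by linarith)
          have hl1 : 0 ≤ 1 - l := by linarith
          set p := l • F x + (1 - l) • F y with hp
          set q := l • G x + (1 - l) • G y with hq
          have hpK : p ∈ K := hK (hF x) (hF y) hl0 hl1 (by ring)
          have hqK : q ∈ K := hK (hG x) (hG y) hl0 hl1 (by ring)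
          have hxy : ((x + y : Submodule.span ℝ (K - K)) : V) = (t + s) • (p - q) := by
            have hcoe : ((x + y : Submodule.span ℝ (K - K)) : V) = (x : V) + (y : V) := rfl
            rw [hcoe, hrep x, hrep y, hp, hq, hl]
            match_scalars <;> field_simp <;> ring
          have hMxy : M (x + y) = (t + s) * ρ p q := key (x + y) (t + s) hts p hpK q hqK hxy
          -- bound ρ p q
          set m := l • G x + (1 - l) • F y with hm
          have hmK : m ∈ K := hK (hG x) (hF y) hl0 hl1 (by ring)
          have htri := hρ.2.2 p hpK m hmK q hqK
          obtain ⟨hp1K, hp1d, hp1ρ⟩ :=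
            auxScaled hK hρ hconv hbal (hF x) (hG x) (⟨hl0, hl1'⟩ : l ∈ Set.Icc (0:ℝ) 1)
          have hpm : ρ p m = l * ρ (F x) (G x) := by
            rw [← hp1ρ]
            refine auxA hbal hpK hmK hp1K (hG x) ?_
            rw [hp1d, hp, hm]
            module
          obtain ⟨hp2K, hp2d, hp2ρ⟩ :=
            auxScaled hK hρ hconv hbal (hF y) (hG y)
              (⟨by linarith, by linarith⟩ : 1 - l ∈ Set.Icc (0:ℝ) 1)
          have hmq : ρ m q = (1 - l) * ρ (F y) (G y) := by
            rw [← hp2ρ]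
            refine auxA hbal hmK hqK hp2K (hG y) ?_
            rw [hp2d, hm, hq]
            module
          have hbound : ρ p q ≤ l * ρ (F x) (G x) + (1 - l) * ρ (F y) (G y) := by
            rw [← hpm, ← hmq]; exact htri
          have e1 : (t + s) * l = t := by rw [hl]; field_simp
          have e2 : (t + s) * (1 - l) = s := by rw [hl]; field_simp; ring
          have hMx : M x = t * ρ (F x) (G x) := rfl
          have hMy : M y = s * ρ (F y) (G y) := rfl
          rw [hMxy, hMx, hMy]
          calc (t + s) * ρ p q
              ≤ (t + s) * (l * ρ (F x) (G x) + (1 - l) * ρ (F y) (G y)) := by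
                apply mul_le_mul_of_nonneg_left hbound (le_of_lt hts)
            _ = (t + s) * l * ρ (F x) (G x) + (t + s) * (1 - l) * ρ (F y) (G y) := by ring
            _ = t * ρ (F x) (G x) + s * ρ (F y) (G y) := by rw [e1, e2]
        · -- homogeneity
          intro c x
          rcases lt_trichotomy c 0 with hc | hc | hc
          · have hx : ((c • x : Submodule.span ℝ (K - K)) : V) =
                ((-c) * T x) • (G x - F x) := by
              have hcoe : ((c • x : Submodule.span ℝ (K - K)) : V) = c • (x : V) := rfl
              rw [hcoe, hrep x]
              match_scalars <;> ring
            rw [key (c • x) ((-c) * T x) (mul_pos (neg_pos.2 hc) (hT x)) (G x) (hG x)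
              (F x) (hF x) hx]
            rw [hρ.2.1 (G x) (hG x) (F x) (hF x), abs_of_neg hc, hM]
            ring
          · subst hc
            rw [zero_smul]
            rw [(hzero 0).2 rfl]
            simp
          · have hx : ((c • x : Submodule.span ℝ (K - K)) : V) =
                (c * T x) • (F x - G x) := by
              have hcoe : ((c • x : Submodule.span ℝ (K - K)) : V) = c • (x : V) := rfl
              rw [hcoe, hrep x, smul_smul]
            rw [key (c • x) (c * T x) (mul_pos hc (hT x)) (F x) (hF x) (G x) (hG x) hx]
            rw [abs_of_pos hc, hM]
            ring
        · -- compatibility with ρ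
          intro μ hμ ν hν
          have := key ⟨μ - ν, Submodule.subset_span (Set.sub_mem_sub hμ hν)⟩ 1 one_pos
            μ hμ ν hν (by rw [one_smul])
          rw [this, one_mul]
      · -- degenerate case: K empty
        rw [Set.not_nonempty_iff_eq_empty] at hne
        have hspan : Submodule.span ℝ (K - K) ≤ ⊥ := by
          rw [hne]; simp
        have hW : ∀ x : Submodule.span ℝ (K - K), x = 0 := fun x =>
          Subtype.ext ((Submodule.mem_bot ℝ).mp (hspan x.2))
        refine ⟨fun _ => 0, ⟨fun x => ⟨fun _ => hW x, fun _ => rfl⟩,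
          fun _ _ => by norm_num, fun _ _ => by simp⟩, ?_⟩
        intro μ hμ
        rw [hne] at hμ
        exact absurd hμ (Set.notMem_empty μ)
  · -- uniqueness
    intro M M' hNM hNM' hMρ hM'ρ
    funext x
    by_cases hne : K.Nonempty
    · obtain ⟨t, ht, μ, hμ, ν, hν, hx⟩ := auxC hK hne x.2
      have hxe : x = t • (⟨μ - ν, Submodule.subset_span (Set.sub_mem_sub hμ hν)⟩ :
          Submodule.span ℝ (K - K)) := Subtype.ext hx
      rw [hxe, hNM.2.2, hNM'.2.2, ← hMρ μ hμ ν hν, ← hM'ρ μ hμ ν hν]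
    · rw [Set.not_nonempty_iff_eq_empty] at hne
      have hspan : Submodule.span ℝ (K - K) ≤ ⊥ := by
        rw [hne]; simp
      have hx0 : x = 0 := Subtype.ext ((Submodule.mem_bot ℝ).mp (hspan x.2))
      rw [hx0, (hNM.1 0).2 rfl, (hNM'.1 0).2 rfl]
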